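/- With the James-space construction below, one has 1/4 ≤ d*(d) ≤ B. -/

import Mathlib

open Filter MeasureTheory

/-- The set of candidate values whose supremum (times `1/√2`) defines the James norm. -/
def jamesSet (x : ℕ → ℝ) : Set ℝ :=
  {r : ℝ | ∃ (m : ℕ) (p : Fin (m + 1) → ℕ), StrictMono p ∧
    r = Real.sqrt ((∑ i : Fin m, (x (p i.castSucc) - x (p i.succ)) ^ 2)
      + (x (p (Fin.last m)) - x (p 0)) ^ 2)}

/-- The James norm of a sequence. -/
noncomputable def jamesNorm (x : ℕ → ℝ) : ℝ :=
  (Real.sqrt 2)⁻¹ * sSup (jamesSet x)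

/-- `d_n = Σ_{j≤n} e_j = (1,…,1,0,…)` with `n+1` leading ones. -/
def dSeq (n : ℕ) : ℕ → ℝ := fun j => if j ≤ n then 1 else 0

/-- `|x| = Σ_{i≤K} |γ*_i(x)|·ω_i`, the lattice absolute value induced by a basis
`ω` with coordinate functionals `γ`. -/
noncomputable def absVec (K : ℕ) (ω : Fin (K + 1) → ℕ → ℝ)
    (γ : Fin (K + 1) → (ℕ → ℝ) →ₗ[ℝ] ℝ) (x : ℕ → ℝ) : ℕ → ℝ :=
  ∑ i, |γ i x| • ω i

/-- `d = Σ_{j≤K} 2^{−j−1}·|d_j|`. -/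
noncomputable def dElt (K : ℕ) (ω : Fin (K + 1) → ℕ → ℝ)
    (γ : Fin (K + 1) → (ℕ → ℝ) →ₗ[ℝ] ℝ) : ℕ → ℝ :=
  ∑ j : Fin (K + 1), ((2 : ℝ) ^ ((j : ℕ) + 1))⁻¹ • absVec K ω γ (dSeq j)

/-- `d* = Σ_{j≤K} 2^{−j−1}·|e*_j|`, as a function on sequences; here
`|e*_j|(x) = Σ_{i≤K} γ*_i(x)·|e*_j(ω_i)| = Σ_{i≤K} γ*_i(x)·|ω_i(j)|`. -/
noncomputable def dStar (K : ℕ) (ω : Fin (K + 1) → ℕ → ℝ)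
    (γ : Fin (K + 1) → (ℕ → ℝ) →ₗ[ℝ] ℝ) (x : ℕ → ℝ) : ℝ :=
  ∑ j : Fin (K + 1), ((2 : ℝ) ^ ((j : ℕ) + 1))⁻¹ * (∑ i, γ i x * |ω i (j : ℕ)|)

/-- The probability measure on `Ω = {0,…,K}` given by
`μ({i}) = γ*_i(d)·d*(ω_i)/d*(d)`. -/
noncomputable def jMeasure (K : ℕ) (ω : Fin (K + 1) → ℕ → ℝ)
    (γ : Fin (K + 1) → (ℕ → ℝ) →ₗ[ℝ] ℝ) : Measure (Fin (K + 1)) :=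
  ∑ i : Fin (K + 1),
    (ENNReal.ofReal (γ i (dElt K ω γ) * dStar K ω γ (ω i) / dStar K ω γ (dElt K ω γ))) •
      Measure.dirac i

/-- The embedding `π : J_K → L¹(Ω,μ)`, `π(x)(i) = (d*(d)/γ*_i(d))·γ*_i(x)`. -/
noncomputable def jPi (K : ℕ) (ω : Fin (K + 1) → ℕ → ℝ)
    (γ : Fin (K + 1) → (ℕ → ℝ) →ₗ[ℝ] ℝ) (x : ℕ → ℝ) : Fin (K + 1) → ℝ :=
  fun i => (dStar K ω γ (dElt K ω γ) / γ i (dElt K ω γ)) * γ i x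

/-- The embedding `π* : J_K* → L¹(Ω,μ)`, `π*(x*)(i) = (d*(d)/d*(ω_i))·x*(ω_i)`. -/
noncomputable def jPiStar (K : ℕ) (ω : Fin (K + 1) → ℕ → ℝ)
    (γ : Fin (K + 1) → (ℕ → ℝ) →ₗ[ℝ] ℝ) (f : (ℕ → ℝ) →ₗ[ℝ] ℝ) : Fin (K + 1) → ℝ :=
  fun i => (dStar K ω γ (dElt K ω γ) / dStar K ω γ (ω i)) * f (ω i)

lemma geom_eq (n : ℕ) : ∑ j ∈ Finset.range n, ((2:ℝ)^(j+1))⁻¹ = 1 - ((2:ℝ)^n)⁻¹ := by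
  induction n with
  | zero => simp
  | succ n ih =>
    rw [Finset.sum_range_succ, ih]
    have h : (0:ℝ) < 2^n := by positivity
    field_simp
    ring

lemma fin_geom_le (K : ℕ) : ∑ j : Fin (K+1), ((2:ℝ)^((j:ℕ)+1))⁻¹ ≤ 1 := by
  rw [Fin.sum_univ_eq_sum_range (fun j => ((2:ℝ)^(j+1))⁻¹), geom_eq]
  have h : (0:ℝ) < ((2:ℝ)^(K+1))⁻¹ := by positivity
  linarith

lemma jamesSet_bddAbove (K : ℕ) (x : ℕ → ℝ) (hx : ∀ n, K < n → x n = 0) :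
    BddAbove (jamesSet x) := by
  refine ⟨2 * Real.sqrt (∑ n ∈ Finset.range (K+1), x n ^ 2), ?_⟩
  rintro r ⟨m, p, hp, rfl⟩
  set M := ∑ n ∈ Finset.range (K+1), x n ^ 2 with hM
  have hMnn : 0 ≤ M := Finset.sum_nonneg fun _ _ => sq_nonneg _
  have hT : ∑ k : Fin (m+1), x (p k) ^ 2 ≤ M := by
    have h1 : ∑ k : Fin (m+1), x (p k) ^ 2 = ∑ n ∈ Finset.image p Finset.univ, x n ^ 2 :=
      (Finset.sum_image (f := fun n => x n ^ 2) (g := p)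
        (fun a _ b _ h => hp.injective h)).symm
    have h2 : ∑ n ∈ Finset.image p Finset.univ, x n ^ 2
        = ∑ n ∈ Finset.image p Finset.univ ∩ Finset.range (K+1), x n ^ 2 := by
      refine (Finset.sum_subset Finset.inter_subset_left ?_).symm
      intro n hn hn'
      have hKn : K < n := by
        by_contra h
        exact hn' (Finset.mem_inter.2 ⟨hn, Finset.mem_range.2 (by omega)⟩)
      simp [hx n hKn]
    have h3 : ∑ n ∈ Finset.image p Finset.univ ∩ Finset.range (K+1), x n ^ 2 ≤ M :=
      Finset.sum_le_sum_of_subset_of_nonneg Finset.inter_subset_right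
        (fun _ _ _ => sq_nonneg _)
    rw [h1, h2]; exact h3
  have e1 : ∑ k : Fin (m+1), x (p k) ^ 2
      = ∑ i : Fin m, x (p i.castSucc) ^ 2 + x (p (Fin.last m)) ^ 2 :=
    Fin.sum_univ_castSucc _
  have e2 : ∑ k : Fin (m+1), x (p k) ^ 2
      = x (p 0) ^ 2 + ∑ i : Fin m, x (p i.succ) ^ 2 :=
    Fin.sum_univ_succ _
  have h4 : ∑ i : Fin m, (x (p i.castSucc) - x (p i.succ)) ^ 2
      ≤ ∑ i : Fin m, (2 * x (p i.castSucc)^2 + 2 * x (p i.succ)^2) :=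
    Finset.sum_le_sum (fun i _ => by nlinarith [sq_nonneg (x (p i.castSucc) + x (p i.succ))])
  rw [Finset.sum_add_distrib, ← Finset.mul_sum, ← Finset.mul_sum] at h4
  have hS : (∑ i : Fin m, (x (p i.castSucc) - x (p i.succ)) ^ 2)
      + (x (p (Fin.last m)) - x (p 0)) ^ 2 ≤ 4 * M := by
    nlinarith [sq_nonneg (x (p (Fin.last m)) + x (p 0))]
  calc Real.sqrt _ ≤ Real.sqrt (4 * M) := Real.sqrt_le_sqrt hS
    _ = 2 * Real.sqrt M := by
        rw [show (4:ℝ) * M = 2^2 * M by ring, Real.sqrt_mul (by positivity) M,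
          Real.sqrt_sq (by norm_num : (0:ℝ) ≤ 2)]

lemma coord_le_jamesNorm (K : ℕ) (x : ℕ → ℝ) (hx : ∀ n, K < n → x n = 0)
    (j : ℕ) (hj : j ≤ K) : |x j| ≤ jamesNorm x := by
  have hmem : Real.sqrt 2 * |x j| ∈ jamesSet x := by
    refine ⟨1, ![j, K+1], ?_, ?_⟩
    · intro a b hab
      fin_cases a <;> fin_cases b <;> simp_all <;> omega
    · have hx' : x (K+1) = 0 := hx _ (by omega)
      have : (∑ i : Fin 1, (x (![j, K+1] i.castSucc) - x (![j, K+1] i.succ)) ^ 2)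
          + (x (![j, K+1] (Fin.last 1)) - x (![j, K+1] 0)) ^ 2 = 2 * x j ^ 2 := by
        simp [Fin.sum_univ_one, hx', Fin.last]
        ring
      rw [this, Real.sqrt_mul (by norm_num : (0:ℝ) ≤ 2), Real.sqrt_sq_eq_abs]
  have hb := jamesSet_bddAbove K x hx
  have hle := le_csSup hb hmem
  have h2 : (0:ℝ) < Real.sqrt 2 := by positivity
  unfold jamesNorm
  calc |x j| = (Real.sqrt 2)⁻¹ * (Real.sqrt 2 * |x j|) := by field_simp
    _ ≤ (Real.sqrt 2)⁻¹ * sSup (jamesSet x) :=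
        mul_le_mul_of_nonneg_left hle (by positivity)

lemma jamesNorm_dSeq_le (n : ℕ) : jamesNorm (dSeq n) ≤ 1 := by
  have h2 : (0:ℝ) < Real.sqrt 2 := by positivity
  have hsup : sSup (jamesSet (dSeq n)) ≤ Real.sqrt 2 := by
    apply Real.sSup_le _ (Real.sqrt_nonneg 2)
    rintro r ⟨m, p, hp, rfl⟩
    set x := dSeq n with hxdef
    have hx01 : ∀ t, x t = 0 ∨ x t = 1 := by
      intro t; rw [hxdef]; unfold dSeq; split <;> simp
    have hmono : ∀ a b : ℕ, a ≤ b → x b ≤ x a := by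
      intro a b hab; rw [hxdef]; unfold dSeq
      by_cases hb : b ≤ n
      · rw [if_pos hb, if_pos (le_trans hab hb)]
      · rw [if_neg hb]; split <;> norm_num
    have hterm : ∀ i : Fin m,
        (x (p i.castSucc) - x (p i.succ)) ^ 2 = x (p i.castSucc) - x (p i.succ) := by
      intro i
      have hle : p i.castSucc ≤ p i.succ := (hp (Fin.castSucc_lt_succ (i := i))).le
      have h1 := hmono _ _ hle
      rcases hx01 (p i.castSucc) with h|h <;> rcases hx01 (p i.succ) with h'|h'
      · rw [h, h']; norm_num
      · exfalso; rw [h, h'] at h1; linarith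
      · rw [h, h']; norm_num
      · rw [h, h']; norm_num
    have htel : ∑ i : Fin m, (x (p i.castSucc) - x (p i.succ))
        = x (p 0) - x (p (Fin.last m)) := by
      set g : ℕ → ℝ := fun t => x (p ⟨min t m, by omega⟩) with hg
      have hgi : ∀ i : Fin m, x (p i.castSucc) - x (p i.succ) = g i - g ((i : ℕ)+1) := by
        intro i
        have e1 : (⟨min (i:ℕ) m, by omega⟩ : Fin (m+1)) = i.castSucc := by
          ext; simp [Nat.min_eq_left (le_of_lt i.isLt)]
        have e2 : (⟨min ((i:ℕ)+1) m, by omega⟩ : Fin (m+1)) = i.succ := by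
          ext; simp [Nat.min_eq_left i.isLt]
        rw [hg]; simp only [e1, e2]
      have e0 : g 0 = x (p 0) := by
        rw [hg]
        have : (⟨min 0 m, by omega⟩ : Fin (m+1)) = 0 := by ext; simp
        simp only [this]
      have em : g m = x (p (Fin.last m)) := by
        rw [hg]
        have : (⟨min m m, by omega⟩ : Fin (m+1)) = Fin.last m := by ext; simp [Fin.last]
        simp only [this]
      calc ∑ i : Fin m, (x (p i.castSucc) - x (p i.succ))
          = ∑ i : Fin m, (g i - g ((i:ℕ)+1)) := Finset.sum_congr rfl (fun i _ => hgi i)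
        _ = ∑ i ∈ Finset.range m, (g i - g (i+1)) :=
            Fin.sum_univ_eq_sum_range (fun t => g t - g (t+1)) m
        _ = g 0 - g m := Finset.sum_range_sub' g m
        _ = x (p 0) - x (p (Fin.last m)) := by rw [e0, em]
    have hsum : (∑ i : Fin m, (x (p i.castSucc) - x (p i.succ)) ^ 2)
        + (x (p (Fin.last m)) - x (p 0)) ^ 2 ≤ 2 := by
      rw [Finset.sum_congr rfl (fun i _ => hterm i), htel]
      rcases hx01 (p 0) with h|h <;> rcases hx01 (p (Fin.last m)) with h'|h' <;>
        rw [h, h'] <;> norm_num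
    exact Real.sqrt_le_sqrt hsum
  unfold jamesNorm
  rw [inv_mul_le_iff₀ h2, mul_one]
  exact hsup

section Main

variable (K : ℕ) (B : ℝ) (ω : Fin (K + 1) → ℕ → ℝ) (γ : Fin (K + 1) → (ℕ → ℝ) →ₗ[ℝ] ℝ)

lemma gamma_absVec (hdual : ∀ i i' : Fin (K + 1), γ i (ω i') = if i = i' then 1 else 0)
    (x : ℕ → ℝ) (i : Fin (K + 1)) : γ i (absVec K ω γ x) = |γ i x| := by
  unfold absVec
  rw [map_sum]
  simp only [_root_.map_smul, smul_eq_mul, hdual, mul_ite, mul_one, mul_zero]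
  simp

lemma gamma_dElt (hdual : ∀ i i' : Fin (K + 1), γ i (ω i') = if i = i' then 1 else 0)
    (i : Fin (K + 1)) :
    γ i (dElt K ω γ) = ∑ j' : Fin (K+1), ((2:ℝ)^((j':ℕ)+1))⁻¹ * |γ i (dSeq j')| := by
  unfold dElt
  rw [map_sum]
  simp only [_root_.map_smul, smul_eq_mul, gamma_absVec K ω γ hdual]

lemma A_le_B (hB : 1 ≤ B)
    (hω_supp : ∀ i, ∀ j, K < j → ω i j = 0)
    (hbasis : ∀ x : ℕ → ℝ, (∀ j, K < j → x j = 0) → (∑ i, γ i x • ω i) = x)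
    (hunc : ∀ (α ε : Fin (K + 1) → ℝ), (∀ i, ε i = 1 ∨ ε i = -1) →
      jamesNorm (∑ i, (ε i * α i) • ω i) ≤ B * jamesNorm (∑ i, α i • ω i))
    (j' : ℕ) (hj' : j' ≤ K) (j : ℕ) (hj : j ≤ K) :
    ∑ i, |γ i (dSeq j')| * |ω i j| ≤ B := by
  set α : Fin (K+1) → ℝ := fun i => γ i (dSeq j') with hα
  set ε : Fin (K+1) → ℝ := fun i => if 0 ≤ α i * ω i j then 1 else -1 with hε
  set y : ℕ → ℝ := ∑ i, (ε i * α i) • ω i with hy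
  have hεpm : ∀ i, ε i = 1 ∨ ε i = -1 := by
    intro i; rw [hε]; dsimp only; split
    · exact Or.inl rfl
    · exact Or.inr rfl
  have hyj : y j = ∑ i, |α i| * |ω i j| := by
    rw [hy, Finset.sum_apply]
    refine Finset.sum_congr rfl fun i _ => ?_
    simp only [Pi.smul_apply, smul_eq_mul]
    rw [← abs_mul, mul_assoc, hε]
    dsimp only
    split
    · rw [one_mul, abs_of_nonneg (by assumption)]
    · rw [neg_one_mul, abs_of_neg (lt_of_not_ge (by assumption))]
  have hysupp : ∀ n, K < n → y n = 0 := by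
    intro n hn
    rw [hy, Finset.sum_apply]
    simp [hω_supp _ _ hn]
  have hcoord : |y j| ≤ jamesNorm y := coord_le_jamesNorm K y hysupp j hj
  have h1 : jamesNorm y ≤ B * jamesNorm (∑ i, α i • ω i) := hunc α ε hεpm
  have h2 : (∑ i, α i • ω i) = dSeq j' := by
    rw [hα]
    exact hbasis _ (fun n hn => by unfold dSeq; rw [if_neg (by omega)])
  calc ∑ i, |α i| * |ω i j| = y j := hyj.symm
    _ ≤ |y j| := le_abs_self _
    _ ≤ jamesNorm y := hcoord
    _ ≤ B * jamesNorm (dSeq j') := by rw [← h2]; exact h1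
    _ ≤ B * 1 := mul_le_mul_of_nonneg_left (jamesNorm_dSeq_le _) (le_trans zero_le_one hB)
    _ = B := mul_one B

end Main


/-- With the James-space construction, `1/4 ≤ d*(d) ≤ B`. -/
theorem dStar_dElt_bounds
    (K : ℕ) (B : ℝ) (hB : 1 ≤ B)
    (ω : Fin (K + 1) → ℕ → ℝ) (γ : Fin (K + 1) → (ℕ → ℝ) →ₗ[ℝ] ℝ)
    (hω_supp : ∀ i, ∀ j, K < j → ω i j = 0)
    (hγ_supp : ∀ i, ∀ x : ℕ → ℝ, (∀ j, j ≤ K → x j = 0) → γ i x = 0)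
    (hbasis : ∀ x : ℕ → ℝ, (∀ j, K < j → x j = 0) → (∑ i, γ i x • ω i) = x)
    (hdual : ∀ i i' : Fin (K + 1), γ i (ω i') = if i = i' then 1 else 0)
    (hunc : ∀ (α ε : Fin (K + 1) → ℝ), (∀ i, ε i = 1 ∨ ε i = -1) →
      jamesNorm (∑ i, (ε i * α i) • ω i) ≤ B * jamesNorm (∑ i, α i • ω i))
    : 1 / 4 ≤ dStar K ω γ (dElt K ω γ) ∧ dStar K ω γ (dElt K ω γ) ≤ B := by
  have hγd := gamma_dElt K ω γ hdual
  have hγnn : ∀ i, 0 ≤ γ i (dElt K ω γ) := by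
    intro i; rw [hγd]
    exact Finset.sum_nonneg fun j' _ => by positivity
  constructor
  · -- lower bound
    have hval0 : (∑ i, γ i (dSeq 0) * ω i 0) = 1 := by
      have hb := hbasis (dSeq 0) (fun n hn => by unfold dSeq; rw [if_neg (by omega)])
      have := congrFun hb 0
      rw [Finset.sum_apply] at this
      simp only [Pi.smul_apply, smul_eq_mul] at this
      rw [this]; unfold dSeq; simp
    have key0 : (1:ℝ)/2 ≤ ∑ i, γ i (dElt K ω γ) * |ω i 0| := by
      have h1 : ∀ i, ((1:ℝ)/2) * |γ i (dSeq 0)| ≤ γ i (dElt K ω γ) := by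
        intro i; rw [hγd]
        have hs := Finset.single_le_sum
          (f := fun j' : Fin (K+1) => ((2:ℝ)^((j':ℕ)+1))⁻¹ * |γ i (dSeq j')|)
          (fun j' _ => by positivity) (Finset.mem_univ (0 : Fin (K+1)))
        simpa using hs
      have h2 : (1:ℝ)/2 ≤ (1/2) * ∑ i, |γ i (dSeq 0)| * |ω i 0| := by
        have habs : (1:ℝ) ≤ ∑ i, |γ i (dSeq 0)| * |ω i 0| := by
          calc (1:ℝ) = |∑ i, γ i (dSeq 0) * ω i 0| := by rw [hval0]; norm_num
            _ ≤ ∑ i, |γ i (dSeq 0) * ω i 0| := Finset.abs_sum_le_sum_abs _ _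
            _ = ∑ i, |γ i (dSeq 0)| * |ω i 0| := by simp [abs_mul]
        linarith
      calc (1:ℝ)/2 ≤ (1/2) * ∑ i, |γ i (dSeq 0)| * |ω i 0| := h2
        _ = ∑ i, ((1:ℝ)/2) * |γ i (dSeq 0)| * |ω i 0| := by
            rw [Finset.mul_sum]; exact Finset.sum_congr rfl fun i _ => by ring
        _ ≤ ∑ i, γ i (dElt K ω γ) * |ω i 0| :=
            Finset.sum_le_sum fun i _ =>
              mul_le_mul_of_nonneg_right (h1 i) (abs_nonneg _)
    unfold dStar
    have hterm_nn : ∀ j : Fin (K+1), j ∈ Finset.univ →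
        0 ≤ ((2:ℝ)^((j:ℕ)+1))⁻¹ * (∑ i, γ i (dElt K ω γ) * |ω i (j:ℕ)|) := by
      intro j _
      have : 0 ≤ ∑ i, γ i (dElt K ω γ) * |ω i (j:ℕ)| :=
        Finset.sum_nonneg fun i _ => mul_nonneg (hγnn i) (abs_nonneg _)
      positivity
    have hs := Finset.single_le_sum hterm_nn (Finset.mem_univ (0 : Fin (K+1)))
    have h0 : ((2:ℝ)^(((0:Fin (K+1)):ℕ)+1))⁻¹
        * (∑ i, γ i (dElt K ω γ) * |ω i ((0:Fin (K+1)):ℕ)|)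
        = (1/2) * (∑ i, γ i (dElt K ω γ) * |ω i 0|) := by norm_num
    rw [h0] at hs
    linarith
  · -- upper bound
    have hA : ∀ (j' j : Fin (K+1)),
        ∑ i, |γ i (dSeq (j':ℕ))| * |ω i (j:ℕ)| ≤ B :=
      fun j' j => A_le_B K B ω γ hB hω_supp hbasis hunc j' (Nat.lt_succ_iff.mp j'.isLt)
        j (Nat.lt_succ_iff.mp j.isLt)
    set c : Fin (K+1) → ℝ := fun j => ((2:ℝ)^((j:ℕ)+1))⁻¹ with hc
    have hcnn : ∀ j, (0:ℝ) ≤ c j := fun j => by rw [hc]; positivity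
    have hstep : ∀ j : Fin (K+1),
        (∑ i, γ i (dElt K ω γ) * |ω i (j:ℕ)|) ≤ (∑ j' : Fin (K+1), c j') * B := by
      intro j
      calc (∑ i, γ i (dElt K ω γ) * |ω i (j:ℕ)|)
          = ∑ i, ∑ j' : Fin (K+1), c j' * |γ i (dSeq (j':ℕ))| * |ω i (j:ℕ)| := by
            refine Finset.sum_congr rfl fun i _ => ?_
            rw [hγd i, Finset.sum_mul]
        _ = ∑ j' : Fin (K+1), ∑ i, c j' * |γ i (dSeq (j':ℕ))| * |ω i (j:ℕ)| :=
            Finset.sum_comm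
        _ = ∑ j' : Fin (K+1), c j' * ∑ i, |γ i (dSeq (j':ℕ))| * |ω i (j:ℕ)| := by
            refine Finset.sum_congr rfl fun j' _ => ?_
            rw [Finset.mul_sum]
            exact Finset.sum_congr rfl fun i _ => by ring
        _ ≤ ∑ j' : Fin (K+1), c j' * B :=
            Finset.sum_le_sum fun j' _ =>
              mul_le_mul_of_nonneg_left (hA j' j) (hcnn j')
        _ = (∑ j' : Fin (K+1), c j') * B := (Finset.sum_mul _ _ _).symm
    have hgeom : ∑ j : Fin (K+1), c j ≤ 1 := fin_geom_le K
    have hgnn : (0:ℝ) ≤ ∑ j : Fin (K+1), c j :=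
      Finset.sum_nonneg fun j _ => hcnn j
    have hB0 : (0:ℝ) ≤ B := le_trans zero_le_one hB
    calc dStar K ω γ (dElt K ω γ)
        = ∑ j : Fin (K+1), c j * (∑ i, γ i (dElt K ω γ) * |ω i (j:ℕ)|) := rfl
      _ ≤ ∑ j : Fin (K+1), c j * ((∑ j' : Fin (K+1), c j') * B) :=
          Finset.sum_le_sum fun j _ =>
            mul_le_mul_of_nonneg_left (hstep j) (hcnn j)
      _ = (∑ j : Fin (K+1), c j) * ((∑ j' : Fin (K+1), c j') * B) :=
          (Finset.sum_mul _ _ _).symm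
      _ ≤ 1 * ((∑ j' : Fin (K+1), c j') * B) :=
          mul_le_mul_of_nonneg_right hgeom (mul_nonneg hgnn hB0)
      _ = (∑ j' : Fin (K+1), c j') * B := one_mul _
      _ ≤ 1 * B := mul_le_mul_of_nonneg_right hgeom hB0
      _ = B := one_mul _
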